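/- Let A ∈ ℝ^{n×d}, let t ≥ 0, and suppose that at most k entries of A have absolute value greater than t, i.e. |{(i,j) : |A_{ij}| > t}| ≤ k. Then there exists a matrix M ∈ ℝ^{n×d} with rank(M) ≤ k such that ‖A − M‖_F² ≤ n·d·t². -/

import Mathlib

open Matrix in
/-- if at most k entries of A exceed t in absolute value, then A is
within squared Frobenius distance n·d·t² of a matrix of rank at most k. -/
theorem exists_low_rank_close_of_few_large_entries
    (n d k : ℕ) (A : Matrix (Fin n) (Fin d) ℝ) (t : ℝ) (ht : 0 ≤ t)
    (hfew : {ij : Fin n × Fin d | t < |A ij.1 ij.2|}.ncard ≤ k) :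
    ∃ M : Matrix (Fin n) (Fin d) ℝ, M.rank ≤ k ∧
      ∑ i : Fin n, ∑ j : Fin d, (A i j - M i j) ^ 2 ≤ (n : ℝ) * d * t ^ 2 := by
  classical
  set M : Matrix (Fin n) (Fin d) ℝ :=
    fun i j => if t < |A i j| then A i j else 0 with hM
  refine ⟨M, ?_, ?_⟩
  · -- rank bound
    set S : Set (Fin n × Fin d) := {ij : Fin n × Fin d | t < |A ij.1 ij.2|} with hS
    set T : Finset (Fin d) := Finset.univ.filter (fun j => ∃ i, t < |A i j|) with hT
    have hTk : T.card ≤ k := by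
      refine le_trans ?_ hfew
      rw [Set.ncard_eq_toFinset_card']
      refine Finset.card_le_card_of_surjOn Prod.snd ?_
      intro j hj
      simp only [hT, Finset.coe_filter, Set.mem_setOf_eq, Finset.mem_univ, true_and] at hj
      obtain ⟨i, hi⟩ := hj
      exact ⟨(i, j), by simp [hS, hi], rfl⟩
    have hrange : Set.range Mᵀ ⊆ insert 0 (Mᵀ '' ↑T) := by
      rintro _ ⟨j, rfl⟩
      by_cases hj : j ∈ T
      · exact Set.mem_insert_of_mem _ ⟨j, hj, rfl⟩
      · left
        simp only [hT, Finset.mem_filter, Finset.mem_univ, true_and, not_exists] at hj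
        funext i
        change M i j = 0; simp [hM, hj i]
    have h1 : M.rank ≤ (T.image Mᵀ).card := by
      rw [Matrix.rank_eq_finrank_span_cols]
      have hspan : Submodule.span ℝ (Set.range Mᵀ) ≤
          Submodule.span ℝ ((T.image Mᵀ : Finset (Fin n → ℝ)) : Set (Fin n → ℝ)) := by
        refine Submodule.span_le.2 (fun x hx => ?_)
        rcases hrange hx with h0 | hmem
        · subst h0; exact Submodule.zero_mem _
        · exact Submodule.subset_span (by
            obtain ⟨j, hj, rfl⟩ := hmem
            exact Finset.mem_coe.2 (Finset.mem_image_of_mem _ hj))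
      calc Module.finrank ℝ (Submodule.span ℝ (Set.range Mᵀ))
          ≤ Module.finrank ℝ (Submodule.span ℝ
              ((T.image Mᵀ : Finset (Fin n → ℝ)) : Set (Fin n → ℝ))) :=
            Submodule.finrank_mono hspan
        _ ≤ (T.image Mᵀ).card := finrank_span_finset_le_card _
    exact h1.trans ((Finset.card_image_le).trans hTk)
  · -- distance bound
    have key : ∀ i j, (A i j - M i j) ^ 2 ≤ t ^ 2 := by
      intro i j
      by_cases h : t < |A i j|
      · have hz : A i j - M i j = 0 := by simp [hM, h]
        rw [hz]
        nlinarith [sq_nonneg t]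
      · push_neg at h
        simp only [hM, if_neg (not_lt.2 h), sub_zero]
        calc (A i j) ^ 2 = |A i j| ^ 2 := (sq_abs _).symm
          _ ≤ t ^ 2 := pow_le_pow_left₀ (abs_nonneg _) h 2
    calc ∑ i : Fin n, ∑ j : Fin d, (A i j - M i j) ^ 2
        ≤ ∑ i : Fin n, ∑ j : Fin d, t ^ 2 :=
          Finset.sum_le_sum (fun i _ => Finset.sum_le_sum (fun j _ => key i j))
      _ = (n : ℝ) * d * t ^ 2 := by
          simp [Finset.sum_const, mul_assoc]
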